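/- Let d, N, M be integers with d ≥ 2, M ≥ 2 and N(M−1) = d²−1, and let {G_{α,k} : α = 1,…,N; k = 1,…,M−1} be traceless Hermitian d×d complex matrices that are orthonormal for the Hilbert–Schmidt inner product, i.e. tr(G_{α,k} G_{β,l}) = δ_{αβ} δ_{kl}. For each α set G_α = Σ_{k=1}^{M−1} G_{α,k}, define H_{α,k} = G_α − √M(√M+1) G_{α,k} for k = 1,…,M−1 and H_{α,M} = (√M+1) G_α, and for a real number t define E_{α,k} = (1/M) I_d + t H_{α,k}. Then for all α, Σ_{k=1}^M E_{α,k} = I_d and tr(E_{α,k}) = d/M; moreover, with x = d/M² + t²(M−1)(√M+1)², one has tr(E_{α,k}²) = x for all α,k, tr(E_{α,k} E_{α,l}) = (d − M x)/(M(M−1)) for k ≠ l, and tr(E_{α,k} E_{β,l}) = d/M² for α ≠ β. In particular, if in addition every E_{α,k} is positive semidefinite, then {E_{α,k}} is an (N,M) POVM on C^d with parameter x. -/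
import Mathlib


open Matrix
open scoped BigOperators ComplexOrder Kronecker

noncomputable section


/-- An `(N,M)` POVM on `ℂ^d` with parameter `x` (as in CONTEXT 12, without the
range condition on `x`). -/
def IsNMPOVM (d N M : ℕ) (x : ℝ)
    (E : Fin N → Fin M → Matrix (Fin d) (Fin d) ℂ) : Prop :=
  (∀ α k, (E α k).PosSemidef) ∧
  (∀ α, ∑ k, E α k = 1) ∧
  (∀ α k, (E α k).trace = (d : ℂ) / (M : ℂ)) ∧
  (∀ α k, (E α k * E α k).trace = (x : ℂ)) ∧
  (∀ α k l, k ≠ l →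
    (E α k * E α l).trace = ((((d : ℝ) - M * x) / (M * ((M : ℝ) - 1)) : ℝ) : ℂ)) ∧
  (∀ α β k l, α ≠ β → (E α k * E β l).trace = (d : ℂ) / ((M : ℂ) ^ 2))

/-- `G_α = Σ_{k=1}^{M−1} G_{α,k}`. -/
def Gsum {d N M : ℕ} (G : Fin N → Fin (M - 1) → Matrix (Fin d) (Fin d) ℂ)
    (α : Fin N) : Matrix (Fin d) (Fin d) ℂ :=
  ∑ k, G α k

/-- `H_{α,k} = G_α − √M(√M+1) G_{α,k}` for `k = 1,…,M−1` and
`H_{α,M} = (√M+1) G_α`. -/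
def Hop {d N M : ℕ} (G : Fin N → Fin (M - 1) → Matrix (Fin d) (Fin d) ℂ)
    (α : Fin N) (k : Fin M) : Matrix (Fin d) (Fin d) ℂ :=
  if h : (k : ℕ) < M - 1 then
    Gsum G α - ((Real.sqrt M * (Real.sqrt M + 1) : ℝ) : ℂ) • G α ⟨(k : ℕ), h⟩
  else
    (((Real.sqrt M + 1 : ℝ)) : ℂ) • Gsum G α

/-- `E_{α,k} = (1/M) I_d + t H_{α,k}`. -/
def Eop {d N M : ℕ} (G : Fin N → Fin (M - 1) → Matrix (Fin d) (Fin d) ℂ)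
    (t : ℝ) (α : Fin N) (k : Fin M) : Matrix (Fin d) (Fin d) ℂ :=
  ((M : ℂ))⁻¹ • (1 : Matrix (Fin d) (Fin d) ℂ) + (t : ℂ) • Hop G α k

section PovmAux

variable {d N M : ℕ} (G : Fin N → Fin (M - 1) → Matrix (Fin d) (Fin d) ℂ)

lemma trace_Gsum (htr : ∀ α k, (G α k).trace = 0) (α : Fin N) :
    (Gsum G α).trace = 0 := by
  simp [Gsum, Matrix.trace_sum, htr]

lemma trace_Gsum_mul_G
    (horth : ∀ α k β l, (G α k * G β l).trace = if α = β ∧ k = l then 1 else 0)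
    (α β : Fin N) (l : Fin (M - 1)) :
    ((Gsum G α) * G β l).trace = if α = β then 1 else 0 := by
  simp only [Gsum, Finset.sum_mul, Matrix.trace_sum, horth]
  by_cases h : α = β <;> simp [h]

lemma trace_G_mul_Gsum
    (horth : ∀ α k β l, (G α k * G β l).trace = if α = β ∧ k = l then 1 else 0)
    (α β : Fin N) (k : Fin (M - 1)) :
    ((G α k) * Gsum G β).trace = if α = β then 1 else 0 := by
  simp only [Gsum, Finset.mul_sum, Matrix.trace_sum, horth]
  by_cases h : α = β <;> simp [h]

lemma trace_Gsum_mul_Gsum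
    (horth : ∀ α k β l, (G α k * G β l).trace = if α = β ∧ k = l then 1 else 0)
    (α β : Fin N) :
    ((Gsum G α) * Gsum G β).trace = if α = β then ((M - 1 : ℕ) : ℂ) else 0 := by
  have h : ((Gsum G α) * Gsum G β).trace
      = ∑ k : Fin (M - 1), ((G α k) * Gsum G β).trace := by
    simp [Gsum, Finset.sum_mul, Matrix.trace_sum]
  rw [h]
  simp only [trace_G_mul_Gsum G horth]
  by_cases h : α = β <;> simp [h]

lemma trace_Hop (htr : ∀ α k, (G α k).trace = 0) (α : Fin N) (k : Fin M) :
    (Hop G α k).trace = 0 := by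
  unfold Hop
  split <;>
    simp [Matrix.trace_sub, Matrix.trace_smul, trace_Gsum G htr, htr]

lemma sum_Hop (hM : 2 ≤ M) (α : Fin N) :
    ∑ k : Fin M, Hop G α k = 0 := by
  have hM1 : M - 1 + 1 = M := by omega
  rw [← Fin.sum_congr' (fun k : Fin M => Hop G α k) hM1]
  rw [Fin.sum_univ_castSucc]
  have h1 : ∀ k : Fin (M - 1),
      Hop G α (Fin.cast hM1 k.castSucc)
        = Gsum G α - ((Real.sqrt M * (Real.sqrt M + 1) : ℝ) : ℂ) • G α k := by
    intro k
    have hlt : ((Fin.cast hM1 k.castSucc : Fin M) : ℕ) < M - 1 := by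
      simp
    rw [Hop, dif_pos hlt]
    congr 1
  have h2 : Hop G α (Fin.cast hM1 (Fin.last (M - 1)))
      = (((Real.sqrt M + 1 : ℝ)) : ℂ) • Gsum G α := by
    have h3 : ¬ ((Fin.cast hM1 (Fin.last (M - 1)) : Fin M) : ℕ) < M - 1 := by
      simp [Fin.coe_cast, Fin.val_last]
    rw [Hop, dif_neg h3]
  rw [h2, Finset.sum_congr rfl (fun k _ => h1 k)]
  rw [Finset.sum_sub_distrib, ← Finset.smul_sum]
  have hcard : ∑ _k : Fin (M - 1), Gsum G α = ((M - 1 : ℕ) : ℂ) • Gsum G α := by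
    simp [Finset.sum_const, Nat.cast_smul_eq_nsmul ℂ]
  rw [hcard]
  show ((M - 1 : ℕ) : ℂ) • Gsum G α
      - ((Real.sqrt M * (Real.sqrt M + 1) : ℝ) : ℂ) • Gsum G α
      + (((Real.sqrt M + 1 : ℝ)) : ℂ) • Gsum G α = 0
  rw [← sub_smul, ← add_smul]
  have hs : ((Real.sqrt M : ℝ) : ℂ) ^ 2 = (M : ℂ) := by
    rw [← Complex.ofReal_pow, Real.sq_sqrt (by positivity)]; push_cast; ring
  have hMc : ((M - 1 : ℕ) : ℂ) = (M : ℂ) - 1 := by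
    rw [Nat.cast_sub (by omega : 1 ≤ M), Nat.cast_one]
  have h4 : ((M - 1 : ℕ) : ℂ) - ((Real.sqrt M * (Real.sqrt M + 1) : ℝ) : ℂ)
      + (((Real.sqrt M + 1 : ℝ)) : ℂ) = 0 := by
    rw [hMc]; push_cast
    linear_combination -hs
  rw [h4, zero_smul]

lemma trace_Hop_mul_Hop (hM : 2 ≤ M)
    (horth : ∀ α k β l, (G α k * G β l).trace = if α = β ∧ k = l then 1 else 0)
    (α β : Fin N) (k l : Fin M) :
    (Hop G α k * Hop G β l).trace =
      if α = β then
        (if k = l then ((M : ℂ) - 1) * (((Real.sqrt M + 1 : ℝ)) : ℂ) ^ 2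
         else -(((Real.sqrt M + 1 : ℝ)) : ℂ) ^ 2)
      else 0 := by
  have hs : ((Real.sqrt M : ℝ) : ℂ) ^ 2 = (M : ℂ) := by
    rw [← Complex.ofReal_pow, Real.sq_sqrt (by positivity)]; push_cast; ring
  have hMc : ((M - 1 : ℕ) : ℂ) = (M : ℂ) - 1 := by
    rw [Nat.cast_sub (by omega : 1 ≤ M), Nat.cast_one]
  by_cases hk : (k : ℕ) < M - 1 <;> by_cases hl : (l : ℕ) < M - 1
  · rw [Hop, dif_pos hk, Hop, dif_pos hl]
    simp only [sub_mul, mul_sub, smul_mul_assoc, mul_smul_comm,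
      Matrix.trace_sub, Matrix.trace_smul, smul_smul,
      trace_Gsum_mul_Gsum G horth, trace_Gsum_mul_G G horth,
      trace_G_mul_Gsum G horth, horth, smul_eq_mul, hMc]
    by_cases hab : α = β
    · subst hab
      by_cases hkl' : k = l
      · subst hkl'
        simp only [if_pos rfl, and_self, if_true, mul_one]
        push_cast
        linear_combination ((((Real.sqrt M : ℝ) : ℂ) + 1) ^ 2 - 1) * hs
      · have h2 : ¬ ((⟨(k : ℕ), hk⟩ : Fin (M - 1)) = ⟨(l : ℕ), hl⟩) := by
          intro h
          exact hkl' (Fin.ext (by simpa using congrArg Fin.val h))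
        simp only [if_pos rfl, if_neg hkl', true_and, if_neg h2, mul_zero, mul_one]
        push_cast
        linear_combination -hs
    · simp [hab]
  · rw [Hop, dif_pos hk, Hop, dif_neg hl]
    have hkl' : k ≠ l := by intro h; subst h; exact hl hk
    simp only [sub_mul, mul_smul_comm, smul_mul_assoc, Matrix.trace_sub,
      Matrix.trace_smul, smul_smul, trace_Gsum_mul_Gsum G horth,
      trace_G_mul_Gsum G horth, smul_eq_mul, hMc]
    by_cases hab : α = β
    · subst hab
      simp only [if_pos rfl, if_neg hkl', mul_one]
      push_cast
      linear_combination (-(((Real.sqrt M : ℝ) : ℂ) + 1)) * hs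
    · simp [hab]
  · rw [Hop, dif_neg hk, Hop, dif_pos hl]
    have hkl' : k ≠ l := by intro h; subst h; exact hk hl
    simp only [mul_sub, smul_mul_assoc, mul_smul_comm, Matrix.trace_sub,
      Matrix.trace_smul, smul_smul, trace_Gsum_mul_Gsum G horth,
      trace_Gsum_mul_G G horth, smul_eq_mul, hMc]
    by_cases hab : α = β
    · subst hab
      simp only [if_pos rfl, if_neg hkl', mul_one]
      push_cast
      linear_combination (-(((Real.sqrt M : ℝ) : ℂ) + 1)) * hs
    · simp [hab]
  · have hkl' : k = l := by
      apply Fin.ext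
      have hk' : (k : ℕ) < M := k.isLt
      have hl' : (l : ℕ) < M := l.isLt
      omega
    subst hkl'
    rw [Hop, dif_neg hk, Hop, dif_neg hk]
    simp only [smul_mul_assoc, mul_smul_comm, Matrix.trace_smul, smul_smul,
      trace_Gsum_mul_Gsum G horth, smul_eq_mul, hMc]
    by_cases hab : α = β
    · simp only [if_pos hab, if_pos rfl, mul_one]
      push_cast
      ring
    · simp [hab]

lemma sum_Eop (hM : 2 ≤ M) (t : ℝ) (α : Fin N) :
    ∑ k : Fin M, Eop G t α k = 1 := by
  have hM0 : (M : ℂ) ≠ 0 := by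
    simpa using (by omega : M ≠ 0)
  simp only [Eop, Finset.sum_add_distrib, ← Finset.smul_sum, sum_Hop G hM α,
    smul_zero, add_zero, Finset.sum_const, Finset.card_univ, Fintype.card_fin]
  rw [smul_comm, ← Nat.cast_smul_eq_nsmul ℂ, smul_smul, mul_inv_cancel₀ hM0,
    one_smul]

lemma trace_Eop (htr : ∀ α k, (G α k).trace = 0) (t : ℝ) (α : Fin N) (k : Fin M) :
    (Eop G t α k).trace = (d : ℂ) / (M : ℂ) := by
  simp [Eop, Matrix.trace_add, Matrix.trace_smul, Matrix.trace_one,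
    trace_Hop G htr, div_eq_mul_inv, mul_comm]

lemma trace_Eop_mul_Eop (htr : ∀ α k, (G α k).trace = 0) (t : ℝ)
    (α β : Fin N) (k : Fin M) (l : Fin M) :
    (Eop G t α k * Eop G t β l).trace
      = (d : ℂ) / (M : ℂ) ^ 2 + (t : ℂ) ^ 2 * (Hop G α k * Hop G β l).trace := by
  simp only [Eop, add_mul, mul_add, smul_mul_assoc, mul_smul_comm, smul_smul,
    Matrix.trace_add, Matrix.trace_smul, Matrix.one_mul, Matrix.mul_one,
    Matrix.trace_one, trace_Hop G htr, smul_eq_mul, Fintype.card_fin]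
  ring

end PovmAux

/-- Construction of informationally complete `(N,M)` POVMs from a traceless
Hermitian orthonormal basis. -/
theorem Eop_isNMPOVM
    {d N M : ℕ} (hd : 2 ≤ d) (hM : 2 ≤ M) (hNM : N * (M - 1) = d ^ 2 - 1)
    (G : Fin N → Fin (M - 1) → Matrix (Fin d) (Fin d) ℂ)
    (hherm : ∀ α k, (G α k).IsHermitian)
    (htraceless : ∀ α k, (G α k).trace = 0)
    (horth : ∀ α k β l,
      (G α k * G β l).trace = if α = β ∧ k = l then 1 else 0)
    (t : ℝ) :
    (∀ α, ∑ k, Eop G t α k = 1) ∧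
    (∀ α k, (Eop G t α k).trace = (d : ℂ) / (M : ℂ)) ∧
    (∀ α k, (Eop G t α k * Eop G t α k).trace =
      (((d : ℝ) / (M : ℝ) ^ 2 +
        t ^ 2 * ((M : ℝ) - 1) * (Real.sqrt M + 1) ^ 2 : ℝ) : ℂ)) ∧
    (∀ α k l, k ≠ l → (Eop G t α k * Eop G t α l).trace =
      ((((d : ℝ) - M * ((d : ℝ) / (M : ℝ) ^ 2 +
          t ^ 2 * ((M : ℝ) - 1) * (Real.sqrt M + 1) ^ 2)) /
        (M * ((M : ℝ) - 1)) : ℝ) : ℂ)) ∧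
    (∀ α β k l, α ≠ β → (Eop G t α k * Eop G t β l).trace =
      (d : ℂ) / ((M : ℂ) ^ 2)) ∧
    ((∀ α k, (Eop G t α k).PosSemidef) →
      IsNMPOVM d N M
        ((d : ℝ) / (M : ℝ) ^ 2 + t ^ 2 * ((M : ℝ) - 1) * (Real.sqrt M + 1) ^ 2)
        (Eop G t)) := by
  have hM0 : (M : ℂ) ≠ 0 := by simpa using (by omega : M ≠ 0)
  have hM1 : (M : ℂ) - 1 ≠ 0 := by
    rw [sub_ne_zero]
    exact_mod_cast (by omega : M ≠ 1)
  have p1 : ∀ α, ∑ k, Eop G t α k = 1 := fun α => sum_Eop G hM t α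
  have p2 : ∀ α k, (Eop G t α k).trace = (d : ℂ) / (M : ℂ) :=
    fun α k => trace_Eop G htraceless t α k
  have p3 : ∀ α k, (Eop G t α k * Eop G t α k).trace =
      (((d : ℝ) / (M : ℝ) ^ 2 +
        t ^ 2 * ((M : ℝ) - 1) * (Real.sqrt M + 1) ^ 2 : ℝ) : ℂ) := by
    intro α k
    rw [trace_Eop_mul_Eop G htraceless t α α k k,
      trace_Hop_mul_Hop G hM horth α α k k, if_pos rfl, if_pos rfl]
    push_cast
    ring
  have p4 : ∀ α k l, k ≠ l → (Eop G t α k * Eop G t α l).trace =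
      ((((d : ℝ) - M * ((d : ℝ) / (M : ℝ) ^ 2 +
          t ^ 2 * ((M : ℝ) - 1) * (Real.sqrt M + 1) ^ 2)) /
        (M * ((M : ℝ) - 1)) : ℝ) : ℂ) := by
    intro α k l hkl
    rw [trace_Eop_mul_Eop G htraceless t α α k l,
      trace_Hop_mul_Hop G hM horth α α k l, if_pos rfl, if_neg hkl]
    push_cast
    field_simp
    ring
  have p5 : ∀ α β k l, α ≠ β → (Eop G t α k * Eop G t β l).trace =
      (d : ℂ) / ((M : ℂ) ^ 2) := by
    intro α β k l hab
    rw [trace_Eop_mul_Eop G htraceless t α β k l,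
      trace_Hop_mul_Hop G hM horth α β k l, if_neg hab]
    ring
  exact ⟨p1, p2, p3, p4, p5, fun hpos => ⟨hpos, p1, p2, p3, p4, p5⟩⟩
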